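/- arXiv:2401.17248 — 3 statements merged into one kernel-verified Lean document; each statement's English description precedes it below -/
import Mathlib

section
/- Let A be a positive self-adjoint operator with eigenvalues λ_k ≥ c·k (c>0), let p = 1/4 + ε with ε > 0, and suppose G ∈ L(H) satisfies A^p G ∈ L(H). Then for every α with 0 ≤ α < min(p, 1/2), the integral ∫₀¹ t^{-2α} ‖e^{-tA} G‖²_{HS} dt is finite. -/
open MeasureTheory Real Set
open scoped ENNReal

lemma exp_neg_le_rpow_neg {m x : ℝ} (hm0 : 0 < m) (hm1 : m ≤ 1) (hx : 0 < x) :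
    Real.exp (-x) ≤ x ^ (-m) := by
  rw [Real.exp_neg, Real.rpow_neg hx.le]
  have h1 : x ^ m ≤ max 1 x := by
    rcases le_total x 1 with h | h
    · exact le_trans (Real.rpow_le_one hx.le h hm0.le) (le_max_left _ _)
    · calc x ^ m ≤ x ^ (1:ℝ) := Real.rpow_le_rpow_of_exponent_le h hm1
        _ = x := Real.rpow_one x
        _ ≤ max 1 x := le_max_right _ _
  have h2 : max 1 x ≤ Real.exp x :=
    max_le (by simpa using Real.exp_le_exp.mpr hx.le) (by linarith [Real.add_one_le_exp x])
  exact inv_anti₀ (Real.rpow_pos_of_pos hx m) (h1.trans h2)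

lemma bessel_bound {H : Type*} [NormedAddCommGroup H] [InnerProductSpace ℝ H] [CompleteSpace H]
    (b : HilbertBasis ℕ ℝ H) (K : H →L[ℝ] H) (j : ℕ) :
    ∑' k : ℕ, ENNReal.ofReal ((b.repr (K (b k)) j) ^ 2) ≤ ENNReal.ofReal (‖K‖ ^ 2) := by
  set y := ContinuousLinearMap.adjoint K (b j) with hy
  have h1 : ∀ k, (b.repr (K (b k)) j) ^ 2 = ‖inner (𝕜 := ℝ) (b k) y‖ ^ 2 := by
    intro k
    rw [b.repr_apply_apply, ← ContinuousLinearMap.adjoint_inner_left K (b k) (b j),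
      real_inner_comm, ← hy, Real.norm_eq_abs, sq_abs]
  have hsum := (b.orthonormal).inner_products_summable (x := y)
  have hle := (b.orthonormal).tsum_inner_products_le y
  calc ∑' k, ENNReal.ofReal ((b.repr (K (b k)) j) ^ 2)
      = ∑' k, ENNReal.ofReal (‖inner (𝕜 := ℝ) (b k) y‖ ^ 2) := by
        exact tsum_congr fun k => by rw [h1]
    _ = ENNReal.ofReal (∑' k, ‖inner (𝕜 := ℝ) (b k) y‖ ^ 2) :=
        (ENNReal.ofReal_tsum_of_nonneg (fun k => by positivity) hsum).symm
    _ ≤ ENNReal.ofReal (‖y‖ ^ 2) := ENNReal.ofReal_le_ofReal hle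
    _ ≤ ENNReal.ofReal (‖K‖ ^ 2) := by
        apply ENNReal.ofReal_le_ofReal
        have hnorm : ‖y‖ ≤ ‖K‖ := by
          calc ‖y‖ ≤ ‖ContinuousLinearMap.adjoint K‖ * ‖b j‖ :=
              (ContinuousLinearMap.adjoint K).le_opNorm (b j)
            _ = ‖K‖ := by
              rw [b.orthonormal.1 j, mul_one, ContinuousLinearMap.adjoint.norm_map]
        exact pow_le_pow_left₀ (norm_nonneg y) hnorm 2

/-- If `lam k ≥ c(k+1)` with `c > 0`, `p = 1/4 + ε` with `ε > 0`, and
`A^p G` is bounded (encoded by the bounded operator `K` with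
`(K x)_k = lam_k^p (G x)_k` spectrally), then for `0 ≤ α < min(p, 1/2)` the
integral `∫₀¹ t^{-2α} ‖e^{-tA}G‖²_{HS} dt` is finite, where the squared
Hilbert–Schmidt norm is `Σ_k Σ_j (e^{-t lam_j} (G e_k)_j)²`. -/
theorem stmt4 {H : Type*} [NormedAddCommGroup H] [InnerProductSpace ℝ H] [CompleteSpace H]
    (b : HilbertBasis ℕ ℝ H) (lam : ℕ → ℝ) (c : ℝ) (hc : 0 < c)
    (hlam : ∀ k : ℕ, c * (k + 1) ≤ lam k)
    (ε p : ℝ) (hε : 0 < ε) (hp : p = 1/4 + ε)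
    (G K : H →L[ℝ] H)
    (hK : ∀ x k, b.repr (K x) k = lam k ^ p * b.repr (G x) k)
    (α : ℝ) (hα0 : 0 ≤ α) (hα : α < min p (1/2)) :
    ∫⁻ t in Set.Ioc (0:ℝ) 1,
        ENNReal.ofReal (t ^ (-(2*α))) *
          ∑' k : ℕ, ∑' j : ℕ,
            ENNReal.ofReal ((Real.exp (-t * lam j) * b.repr (G (b k)) j) ^ 2) < ⊤ := by
  have hp0 : 0 < p := by rw [hp]; linarith
  have hαp : α < p := lt_of_lt_of_le hα (min_le_left _ _)
  have hα2 : α < 1/2 := lt_of_lt_of_le hα (min_le_right _ _)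
  have hlam0 : ∀ j, 0 < lam j := fun j =>
    lt_of_lt_of_le (by positivity) (hlam j)
  set m : ℝ := ((1 - 2*α) + max 0 (1 - 2*p)) / 2 with hmdef
  have hmax1 : max 0 (1 - 2*p) < 1 - 2*α := max_lt (by linarith) (by linarith)
  have hmax0 : 0 ≤ max 0 (1 - 2*p) := le_max_left _ _
  have hmaxp : 1 - 2*p ≤ max 0 (1 - 2*p) := le_max_right _ _
  have hm0 : 0 < m := by rw [hmdef]; linarith
  have hm1 : m ≤ 1 := by
    have : max 0 (1 - 2*p) ≤ 1 := max_le (by norm_num) (by linarith)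
    rw [hmdef]; linarith
  have hmα : 2*α + m < 1 := by rw [hmdef]; linarith
  have hmp : 1 < 2*p + m := by rw [hmdef]; linarith
  -- the comparison function
  set g : ℕ → ℝ → ℝ := fun j t => Real.exp (-(2*t) * lam j) * lam j ^ (-(2*p)) with hgdef
  have hg0 : ∀ j t, 0 ≤ g j t := fun j t => by
    apply mul_nonneg (Real.exp_nonneg _) (Real.rpow_nonneg (hlam0 j).le _)
  -- Step 1: pointwise bound on the double sum
  have key1 : ∀ t : ℝ,
      (∑' k : ℕ, ∑' j : ℕ,
        ENNReal.ofReal ((Real.exp (-t * lam j) * b.repr (G (b k)) j) ^ 2))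
      ≤ ENNReal.ofReal (‖K‖ ^ 2) * ∑' j : ℕ, ENNReal.ofReal (g j t) := by
    intro t
    have hrepr : ∀ k j, (Real.exp (-t * lam j) * b.repr (G (b k)) j) ^ 2
        = g j t * (b.repr (K (b k)) j) ^ 2 := by
      intro k j
      have hl := hlam0 j
      have hne : lam j ^ p ≠ 0 := (Real.rpow_pos_of_pos hl p).ne'
      have hGK : b.repr (G (b k)) j = lam j ^ (-p) * b.repr (K (b k)) j := by
        rw [hK, Real.rpow_neg hl.le]
        field_simp
      rw [hGK]
      have e1 : Real.exp (-t * lam j) * Real.exp (-t * lam j)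
          = Real.exp (-(2*t) * lam j) := by rw [← Real.exp_add]; ring_nf
      have e2 : lam j ^ (-p) * lam j ^ (-p) = lam j ^ (-(2*p)) := by
        rw [← Real.rpow_add hl]; ring_nf
      calc (Real.exp (-t * lam j) * (lam j ^ (-p) * b.repr (K (b k)) j)) ^ 2
          = (Real.exp (-t * lam j) * Real.exp (-t * lam j)) *
            ((lam j ^ (-p) * lam j ^ (-p)) * (b.repr (K (b k)) j) ^ 2) := by ring
        _ = g j t * (b.repr (K (b k)) j) ^ 2 := by simp only [e1, e2, hgdef]; ring
    calc (∑' k : ℕ, ∑' j : ℕ,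
          ENNReal.ofReal ((Real.exp (-t * lam j) * b.repr (G (b k)) j) ^ 2))
        = ∑' k : ℕ, ∑' j : ℕ,
            ENNReal.ofReal (g j t) * ENNReal.ofReal ((b.repr (K (b k)) j) ^ 2) := by
          refine tsum_congr fun k => tsum_congr fun j => ?_
          rw [hrepr, ENNReal.ofReal_mul (hg0 j t)]
      _ = ∑' j : ℕ, ∑' k : ℕ,
            ENNReal.ofReal (g j t) * ENNReal.ofReal ((b.repr (K (b k)) j) ^ 2) :=
          ENNReal.tsum_comm
      _ = ∑' j : ℕ, ENNReal.ofReal (g j t) *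
            ∑' k : ℕ, ENNReal.ofReal ((b.repr (K (b k)) j) ^ 2) := by
          exact tsum_congr fun j => ENNReal.tsum_mul_left
      _ ≤ ∑' j : ℕ, ENNReal.ofReal (g j t) * ENNReal.ofReal (‖K‖ ^ 2) :=
          ENNReal.tsum_le_tsum fun j => mul_le_mul_right (bessel_bound b K j) _
      _ = ENNReal.ofReal (‖K‖ ^ 2) * ∑' j : ℕ, ENNReal.ofReal (g j t) := by
          rw [ENNReal.tsum_mul_right, mul_comm]
  -- measurability
  have hmeas : ∀ j : ℕ, Measurable fun t : ℝ =>
      ENNReal.ofReal (t ^ (-(2*α))) * ENNReal.ofReal (g j t) := by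
    intro j
    have h1 : Measurable fun t : ℝ => t ^ (-(2*α)) := by fun_prop
    have h2 : Measurable fun t : ℝ => g j t := by
      simp only [hgdef]; fun_prop
    exact h1.ennreal_ofReal.mul h2.ennreal_ofReal
  -- Step 2: reduce to sum of single integrals
  have key2 : (∫⁻ t in Set.Ioc (0:ℝ) 1,
      ENNReal.ofReal (t ^ (-(2*α))) *
        ∑' k : ℕ, ∑' j : ℕ,
          ENNReal.ofReal ((Real.exp (-t * lam j) * b.repr (G (b k)) j) ^ 2))
      ≤ ENNReal.ofReal (‖K‖ ^ 2) *
        ∑' j : ℕ, ∫⁻ t in Set.Ioc (0:ℝ) 1,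
          ENNReal.ofReal (t ^ (-(2*α))) * ENNReal.ofReal (g j t) := by
    calc (∫⁻ t in Set.Ioc (0:ℝ) 1,
        ENNReal.ofReal (t ^ (-(2*α))) *
          ∑' k : ℕ, ∑' j : ℕ,
            ENNReal.ofReal ((Real.exp (-t * lam j) * b.repr (G (b k)) j) ^ 2))
        ≤ ∫⁻ t in Set.Ioc (0:ℝ) 1,
            ENNReal.ofReal (‖K‖ ^ 2) *
              ∑' j : ℕ, ENNReal.ofReal (t ^ (-(2*α))) * ENNReal.ofReal (g j t) := by
          apply lintegral_mono
          intro t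
          calc ENNReal.ofReal (t ^ (-(2*α))) *
              ∑' k : ℕ, ∑' j : ℕ,
                ENNReal.ofReal ((Real.exp (-t * lam j) * b.repr (G (b k)) j) ^ 2)
              ≤ ENNReal.ofReal (t ^ (-(2*α))) *
                (ENNReal.ofReal (‖K‖ ^ 2) * ∑' j : ℕ, ENNReal.ofReal (g j t)) :=
                mul_le_mul_right (key1 t) _
            _ = ENNReal.ofReal (‖K‖ ^ 2) *
                ∑' j : ℕ, ENNReal.ofReal (t ^ (-(2*α))) * ENNReal.ofReal (g j t) := by
                simp only [← ENNReal.tsum_mul_left]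
                exact tsum_congr fun j => by ring
      _ = ENNReal.ofReal (‖K‖ ^ 2) *
            ∫⁻ t in Set.Ioc (0:ℝ) 1,
              ∑' j : ℕ, ENNReal.ofReal (t ^ (-(2*α))) * ENNReal.ofReal (g j t) :=
          lintegral_const_mul'' _ (AEMeasurable.ennreal_tsum fun j => (hmeas j).aemeasurable)
      _ = ENNReal.ofReal (‖K‖ ^ 2) *
            ∑' j : ℕ, ∫⁻ t in Set.Ioc (0:ℝ) 1,
              ENNReal.ofReal (t ^ (-(2*α))) * ENNReal.ofReal (g j t) := by
          rw [lintegral_tsum fun j => (hmeas j).aemeasurable]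
  -- Step 3: per-j bound
  set I : ℝ≥0∞ := ∫⁻ t in Set.Ioc (0:ℝ) 1, ENNReal.ofReal (t ^ (-(2*α) - m)) with hIdef
  have key3 : ∀ j : ℕ, (∫⁻ t in Set.Ioc (0:ℝ) 1,
      ENNReal.ofReal (t ^ (-(2*α))) * ENNReal.ofReal (g j t))
      ≤ ENNReal.ofReal ((2 * lam j) ^ (-m) * lam j ^ (-(2*p))) * I := by
    intro j
    have hl := hlam0 j
    calc (∫⁻ t in Set.Ioc (0:ℝ) 1,
        ENNReal.ofReal (t ^ (-(2*α))) * ENNReal.ofReal (g j t))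
        ≤ ∫⁻ t in Set.Ioc (0:ℝ) 1,
            ENNReal.ofReal ((2 * lam j) ^ (-m) * lam j ^ (-(2*p))) *
              ENNReal.ofReal (t ^ (-(2*α) - m)) := by
          apply setLIntegral_mono' measurableSet_Ioc
          intro t ht
          have ht0 : 0 < t := ht.1
          rw [← ENNReal.ofReal_mul (Real.rpow_nonneg ht0.le _),
            ← ENNReal.ofReal_mul (by positivity)]
          apply ENNReal.ofReal_le_ofReal
          have hexp : Real.exp (-(2*t) * lam j) ≤ (2 * t * lam j) ^ (-m) := by
            have := exp_neg_le_rpow_neg hm0 hm1 (show (0:ℝ) < 2 * t * lam j by positivity)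
            convert this using 2
            ring
          have hsplit : (2 * t * lam j) ^ (-m) = (2 * lam j) ^ (-m) * t ^ (-m) := by
            rw [show 2 * t * lam j = (2 * lam j) * t by ring,
              Real.mul_rpow (by positivity) ht0.le]
          calc t ^ (-(2*α)) * g j t
              ≤ t ^ (-(2*α)) * ((2 * lam j) ^ (-m) * t ^ (-m) * lam j ^ (-(2*p))) := by
                apply mul_le_mul_of_nonneg_left _ (Real.rpow_nonneg ht0.le _)
                apply mul_le_mul_of_nonneg_right _ (Real.rpow_nonneg hl.le _)
                rw [← hsplit]
                exact hexp
            _ = (2 * lam j) ^ (-m) * lam j ^ (-(2*p)) * (t ^ (-(2*α)) * t ^ (-m)) := by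
                ring
            _ = (2 * lam j) ^ (-m) * lam j ^ (-(2*p)) * t ^ (-(2*α) - m) := by
                rw [← Real.rpow_add ht0]; ring_nf
      _ = ENNReal.ofReal ((2 * lam j) ^ (-m) * lam j ^ (-(2*p))) * I := by
          rw [hIdef, lintegral_const_mul'' _
            (show Measurable fun t : ℝ => ENNReal.ofReal (t ^ (-(2*α) - m)) by fun_prop).aemeasurable]
  -- Step 4: I is finite
  have hI : I < ⊤ := by
    have hint : IntegrableOn (fun t : ℝ => t ^ (-(2*α) - m)) (Set.Ioc (0:ℝ) 1) := by
      have := intervalIntegral.intervalIntegrable_rpow'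
        (a := 0) (b := 1) (show (-1:ℝ) < -(2*α) - m by linarith)
      exact this.1
    exact hint.lintegral_lt_top
  -- Step 5: the sum of the constants is finite
  have hsumC : (∑' j : ℕ, ENNReal.ofReal ((2 * lam j) ^ (-m) * lam j ^ (-(2*p)))) < ⊤ := by
    have hterm : ∀ j : ℕ, (2 * lam j) ^ (-m) * lam j ^ (-(2*p))
        ≤ 2 ^ (-m) * (c * (j + 1)) ^ (-(m + 2*p)) := by
      intro j
      have hl := hlam0 j
      have hcj : (0:ℝ) < c * (j + 1) := by positivity
      have h1 : (2 * lam j) ^ (-m) = 2 ^ (-m) * lam j ^ (-m) :=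
        Real.mul_rpow (by norm_num) hl.le
      have h2 : lam j ^ (-m) * lam j ^ (-(2*p)) = lam j ^ (-(m + 2*p)) := by
        rw [← Real.rpow_add hl]; ring_nf
      have h3 : lam j ^ (-(m + 2*p)) ≤ (c * (j + 1)) ^ (-(m + 2*p)) :=
        Real.rpow_le_rpow_of_nonpos hcj (hlam j) (by linarith)
      calc (2 * lam j) ^ (-m) * lam j ^ (-(2*p))
          = 2 ^ (-m) * lam j ^ (-(m + 2*p)) := by rw [h1, mul_assoc, h2]
        _ ≤ 2 ^ (-m) * (c * (j + 1)) ^ (-(m + 2*p)) := by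
            apply mul_le_mul_of_nonneg_left h3 (Real.rpow_nonneg (by norm_num) _)
    have hsummable : Summable (fun j : ℕ => 2 ^ (-m) * (c * ((j:ℝ) + 1)) ^ (-(m + 2*p))) := by
      apply Summable.mul_left
      have hbase : Summable (fun n : ℕ => (n:ℝ) ^ (-(m + 2*p))) :=
        Real.summable_nat_rpow.mpr (by linarith)
      have hshift : Summable (fun j : ℕ => ((j:ℝ) + 1) ^ (-(m + 2*p))) := by
        have := (summable_nat_add_iff 1).mpr hbase
        simpa using this
      have : ∀ j : ℕ, (c * ((j:ℝ) + 1)) ^ (-(m + 2*p))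
          = c ^ (-(m + 2*p)) * ((j:ℝ) + 1) ^ (-(m + 2*p)) := fun j =>
        Real.mul_rpow hc.le (by positivity)
      simp only [this]
      exact hshift.mul_left _
    calc (∑' j : ℕ, ENNReal.ofReal ((2 * lam j) ^ (-m) * lam j ^ (-(2*p))))
        ≤ ∑' j : ℕ, ENNReal.ofReal (2 ^ (-m) * (c * ((j:ℝ) + 1)) ^ (-(m + 2*p))) :=
          ENNReal.tsum_le_tsum fun j => ENNReal.ofReal_le_ofReal (hterm j)
      _ = ENNReal.ofReal (∑' j : ℕ, 2 ^ (-m) * (c * ((j:ℝ) + 1)) ^ (-(m + 2*p))) :=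
          (ENNReal.ofReal_tsum_of_nonneg (fun j => by positivity) hsummable).symm
      _ < ⊤ := ENNReal.ofReal_lt_top
  -- Conclusion
  calc (∫⁻ t in Set.Ioc (0:ℝ) 1,
      ENNReal.ofReal (t ^ (-(2*α))) *
        ∑' k : ℕ, ∑' j : ℕ,
          ENNReal.ofReal ((Real.exp (-t * lam j) * b.repr (G (b k)) j) ^ 2))
      ≤ ENNReal.ofReal (‖K‖ ^ 2) *
        ∑' j : ℕ, ∫⁻ t in Set.Ioc (0:ℝ) 1,
          ENNReal.ofReal (t ^ (-(2*α))) * ENNReal.ofReal (g j t) := key2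
    _ ≤ ENNReal.ofReal (‖K‖ ^ 2) *
        ∑' j : ℕ, ENNReal.ofReal ((2 * lam j) ^ (-m) * lam j ^ (-(2*p))) * I := by
        exact mul_le_mul_right (ENNReal.tsum_le_tsum key3) _
    _ = ENNReal.ofReal (‖K‖ ^ 2) *
        ((∑' j : ℕ, ENNReal.ofReal ((2 * lam j) ^ (-m) * lam j ^ (-(2*p)))) * I) := by
        rw [ENNReal.tsum_mul_right]
    _ < ⊤ := ENNReal.mul_lt_top ENNReal.ofReal_lt_top (ENNReal.mul_lt_top hsumC hI)
end

section
/- Let {P_t} be a Markov semigroup on a Hilbert space H and let E ⊂ H be a densely and continuously embedded Banach space with α > 0 (E = D(A^α)). Suppose P is irreducible on E (for all t > 0, x ∈ E and nonempty open U ⊂ E, P_t^*δ_x(U) > 0) and satisfies the (SF) property on E ↪ H (for t > 0, φ ∈ B_b(E), P_tφ(x_n) → P_tφ(x) whenever x_n is bounded in E and x_n → x in H). Then the transition probabilities P_t^*δ_x, for t > 0 and x ∈ E, are mutually equivalent measures on the Borel σ-algebra of E. -/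
open MeasureTheory Filter

/-- If a Markov semigroup (encoded by its transition probabilities
`μ t x = P_t^* δ_x`, satisfying the Chapman–Kolmogorov identity) on the densely
and continuously embedded space `E = D(A^α) ↪ H` is irreducible on `E` and
enjoys the (SF) property on `E ↪ H`, then the transition probabilities
`P_t^* δ_x`, `t > 0`, `x ∈ E`, are mutually equivalent on the Borel σ-algebra
of `E`. -/
theorem stmt7 {E H : Type*} [NormedAddCommGroup E] [NormedSpace ℝ E]
    [NormedAddCommGroup H] [NormedSpace ℝ H]
    [MeasurableSpace E] [BorelSpace E]
    (j : E →L[ℝ] H) (hinj : Function.Injective j) (hdense : DenseRange j)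
    (μ : ℝ → E → Measure E)
    (hprob : ∀ t x, IsProbabilityMeasure (μ t x))
    (hmeas : ∀ t : ℝ, ∀ U : Set E, MeasurableSet U → Measurable fun y => μ t y U)
    (hCK : ∀ x : E, ∀ t h : ℝ, 0 < h → h < t → ∀ U : Set E, MeasurableSet U →
      μ t x U = ∫⁻ y, μ (t - h) y U ∂(μ h x))
    (hirr : ∀ t : ℝ, 0 < t → ∀ x : E, ∀ U : Set E, IsOpen U → U.Nonempty →
      0 < μ t x U)
    (hSF : ∀ t : ℝ, 0 < t → ∀ φ : E → ℝ, Measurable φ → (∃ M, ∀ z, |φ z| ≤ M) →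
      ∀ x : E, ∀ xs : ℕ → E, (∃ R, ∀ n, ‖xs n‖ ≤ R) →
      Tendsto (fun n => j (xs n)) atTop (nhds (j x)) →
      Tendsto (fun n => ∫ z, φ z ∂(μ t (xs n))) atTop (nhds (∫ z, φ z ∂(μ t x)))) :
    ∀ t s : ℝ, 0 < t → 0 < s → ∀ x y : E, μ t x ≪ μ s y := by
  -- Strong Feller: for r > 0 and measurable U, z ↦ (μ r z U).toReal is continuous.
  have key : ∀ r : ℝ, 0 < r → ∀ U : Set E, MeasurableSet U →
      Continuous fun z => (μ r z U).toReal := by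
    intro r hr U hU
    rw [continuous_iff_seqContinuous]
    intro zs z hz
    have hb : ∃ R, ∀ n, ‖zs n‖ ≤ R := by
      obtain ⟨R, hR⟩ := hz.norm.bddAbove_range
      exact ⟨R, fun n => hR ⟨n, rfl⟩⟩
    have hj : Tendsto (fun n => j (zs n)) atTop (nhds (j z)) :=
      ((j.continuous.tendsto z).comp hz)
    have hφm : Measurable (U.indicator (fun _ => (1 : ℝ))) :=
      measurable_const.indicator hU
    have hφb : ∃ M, ∀ w, |U.indicator (fun _ => (1 : ℝ)) w| ≤ M := by
      refine ⟨1, fun w => ?_⟩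
      by_cases hw : w ∈ U <;> simp [Set.indicator, hw]
    have heq : ∀ w : E, ∫ z, U.indicator (fun _ => (1 : ℝ)) z ∂(μ r w)
        = ((μ r w) U).toReal := fun w => integral_indicator_one hU
    have := hSF r hr _ hφm hφb z zs hb hj
    simp only [heq] at this
    simpa [Function.comp_def] using this
  intro t s ht hs x y
  set r := min s t / 2 with hrdef
  have hmin : 0 < min s t := lt_min hs ht
  have hr : 0 < r := by positivity
  have hrs : r < s := by
    have h1 : min s t ≤ s := min_le_left _ _
    rw [hrdef]; linarith
  have hrt : r < t := by
    have h1 : min s t ≤ t := min_le_right _ _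
    rw [hrdef]; linarith
  refine Measure.AbsolutelyContinuous.mk fun U hU hU0 => ?_
  -- Step 1: μ r z U = 0 for a.e. z w.r.t. μ (s - r) y
  have h1 : μ s y U = ∫⁻ z, μ r z U ∂(μ (s - r) y) := by
    have := hCK y s (s - r) (by linarith) (by linarith) U hU
    rwa [show s - (s - r) = r by ring] at this
  have h0 : ∫⁻ z, μ r z U ∂(μ (s - r) y) = 0 := h1.symm.trans hU0
  have hae : ∀ᵐ z ∂(μ (s - r) y), μ r z U = 0 := by
    have := (lintegral_eq_zero_iff (hmeas r U hU)).mp h0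
    filter_upwards [this] with z hz using hz
  -- Step 2: by continuity and irreducibility, μ r z U = 0 for ALL z
  have hzero : ∀ z, μ r z U = 0 := by
    by_contra hc
    push_neg at hc
    obtain ⟨z₀, hz₀⟩ := hc
    have hVopen : IsOpen {z : E | 0 < (μ r z U).toReal} :=
      isOpen_lt continuous_const (key r hr U hU)
    have hVne : Set.Nonempty {z : E | 0 < (μ r z U).toReal} := by
      refine ⟨z₀, ?_⟩
      have hfin : μ r z₀ U ≠ ⊤ := by
        haveI := hprob r z₀
        exact (measure_lt_top _ _).ne
      exact ENNReal.toReal_pos hz₀ hfin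
    have hpos := hirr (s - r) (by linarith) y _ hVopen hVne
    have hnull : μ (s - r) y {z : E | 0 < (μ r z U).toReal} = 0 := by
      refine measure_mono_null ?_ (ae_iff.mp hae)
      intro z hz
      simp only [Set.mem_setOf_eq] at hz ⊢
      intro h0
      rw [h0] at hz
      simp at hz
    rw [hnull] at hpos
    exact lt_irrefl _ hpos
  -- Step 3: conclude μ t x U = 0
  have h2 := hCK x t (t - r) (by linarith) (by linarith) U hU
  rw [show t - (t - r) = r by ring] at h2
  rw [h2]
  simp [hzero]
end

section
/- Markov gluing for path regularity: let X^x be a Markov family of H-valued processes with a.s. continuous paths, pathwise unique, and suppose that for initial data in D(A^γ) the paths lie a.s. in C([0,∞); D(A^γ)). If for x ∈ H the path t ↦ X_t^x lies in L²(0,T; D(A^γ)) a.s. for all T, then for every 0 < t₀ < T the path lies a.s. in C([t₀,T]; D(A^γ)). -/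
open MeasureTheory

/-- Markov gluing for path regularity: let `X^x` be a (jointly measurable)
Markov family of `H`-valued processes with a.s. continuous paths, pathwise
unique, such that for initial data in `E = D(A^γ)` (embedded in `H` by `j`)
the paths a.s. lie in `C([0,∞); D(A^γ))` (hreg). The Markov/uniqueness
restart property is encoded by `hMarkov`: any a.s. property of solutions
started from points of `E` holds a.s. for the time-`t₁`-shifted path whenever
`X^x_{t₁} ∈ D(A^γ)`. If for `x ∈ H` the path lies a.s. in `L²(0,T;D(A^γ))` for
all `T` (hL2), then for every `0 < t₀ < T` the path a.s. lies in
`C([t₀,T]; D(A^γ))`. -/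
theorem stmt19 {H E Ω : Type*} [NormedAddCommGroup H] [NormedSpace ℝ H]
    [MeasurableSpace H] [BorelSpace H]
    [NormedAddCommGroup E] [NormedSpace ℝ E]
    [MeasurableSpace Ω]
    (P : Measure Ω) [IsProbabilityMeasure P]
    (j : E →L[ℝ] H) (hinj : Function.Injective j)
    (hrangemeas : MeasurableSet (Set.range j))
    (X : H → ℝ → Ω → H)
    (hjointmeas : ∀ x : H, Measurable fun p : ℝ × Ω => X x p.1 p.2)
    (hcont : ∀ x : H, ∀ᵐ ω ∂P, Continuous fun t => X x t ω)
    (hreg : ∀ y : E, ∀ᵐ ω ∂P, ∃ u : ℝ → E,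
      ContinuousOn u (Set.Ici 0) ∧ ∀ t : ℝ, 0 ≤ t → X (j y) t ω = j (u t))
    (hL2 : ∀ x : H, ∀ T : ℝ, 0 < T → ∀ᵐ ω ∂P, ∃ u : ℝ → E,
      (∀ᵐ t ∂(volume.restrict (Set.Ioo (0:ℝ) T)), X x t ω = j (u t)) ∧
      ∫⁻ t in Set.Ioo (0:ℝ) T, ENNReal.ofReal (‖u t‖ ^ 2) < ⊤)
    (hMarkov : ∀ x : H, ∀ t₁ : ℝ, 0 ≤ t₁ → ∀ A : (ℝ → H) → Prop,
      (∀ y : E, ∀ᵐ ω ∂P, A fun t => X (j y) t ω) →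
      (∀ᵐ ω ∂P, X x t₁ ω ∈ Set.range j → A fun t => X x (t₁ + t) ω)) :
    ∀ x : H, ∀ t₀ T : ℝ, 0 < t₀ → t₀ < T →
      ∀ᵐ ω ∂P, ∃ u : ℝ → E, ContinuousOn u (Set.Icc t₀ T) ∧
        ∀ t ∈ Set.Icc t₀ T, X x t ω = j (u t) := by
  intro x t₀ T ht₀ htT
  -- Step 1: a.e. ω, a.e. t ∈ (0,t₀), X x t ω ∈ range j
  set ν : Measure ℝ := volume.restrict (Set.Ioo (0:ℝ) t₀) with hν
  have h1 : ∀ᵐ ω ∂P, ∀ᵐ t ∂ν, X x t ω ∈ Set.range j := by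
    filter_upwards [hL2 x t₀ ht₀] with ω hω
    obtain ⟨u, hu, -⟩ := hω
    filter_upwards [hu] with t ht
    exact ⟨u t, ht.symm⟩
  -- Step 2: swap quantifiers using joint measurability
  have hmeas : MeasurableSet {p : ℝ × Ω | X x p.1 p.2 ∈ Set.range j} :=
    (hjointmeas x) hrangemeas
  have h2 : ∀ᵐ t ∂ν, ∀ᵐ ω ∂P, X x t ω ∈ Set.range j := by
    rw [← MeasureTheory.Measure.ae_ae_comm]
    · exact h1
    · exact measurable_swap hmeas
  -- Step 3: pick t₁ ∈ (0, t₀) with a.s. membership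
  have hνne : ν ≠ 0 := by
    simp only [hν, ← Measure.measure_univ_eq_zero, Measure.restrict_apply MeasurableSet.univ,
      Set.univ_inter]
    simp [Real.volume_Ioo, ht₀, ne_of_gt]
  have h3 : ∀ᵐ t ∂ν, t ∈ Set.Ioo (0:ℝ) t₀ ∧ ∀ᵐ ω ∂P, X x t ω ∈ Set.range j :=
    (ae_restrict_mem measurableSet_Ioo).and h2
  haveI : (ae ν).NeBot := ae_neBot.mpr hνne
  obtain ⟨t₁, ht₁mem, ht₁⟩ := h3.exists
  -- Step 4: apply the Markov property at time t₁
  have hA := hMarkov x t₁ ht₁mem.1.le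
    (fun f => ∃ u : ℝ → E, ContinuousOn u (Set.Ici 0) ∧ ∀ t : ℝ, 0 ≤ t → f t = j (u t))
    hreg
  filter_upwards [hA, ht₁] with ω hω hmem
  obtain ⟨u, hucont, hueq⟩ := hω hmem
  refine ⟨fun t => u (t - t₁), ?_, ?_⟩
  · refine hucont.comp (by fun_prop) ?_
    intro t ht
    exact sub_nonneg.mpr (ht₁mem.2.le.trans ht.1)
  · intro t ht
    have h0 : (0:ℝ) ≤ t - t₁ := sub_nonneg.mpr (ht₁mem.2.le.trans ht.1)
    have := hueq (t - t₁) h0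
    simpa [add_sub_cancel] using this
end
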